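/- Locally induced Holevo information of two-qubit Werner states: let ρ_W = e |Ψ_0⟩⟨Ψ_0| + ((1−e)/3) Σ_{i=1}^{3} |Ψ_i⟩⟨Ψ_i| for e ∈ [0,1]. Then C_A(ρ_W) = 1 − H((1+2e)/3) for e ∈ [1/4, 1], and C_A(ρ_W) = 1 − H((2−2e)/3) for e ∈ [0, 1/4], where H is the binary entropy function. -/

import Mathlib

noncomputable section
open scoped BigOperators Kronecker Matrix ComplexOrder
open Matrix

namespace QIT

def IsDensity {n : Type*} [Fintype n] [DecidableEq n] (ρ : Matrix n n ℂ) : Prop :=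
  ρ.PosSemidef ∧ ρ.trace = 1

noncomputable def vN {n : Type*} [Fintype n] [DecidableEq n] (ρ : Matrix n n ℂ) : ℝ :=
  if h : ρ.IsHermitian then ∑ i, -(h.eigenvalues i * Real.logb 2 (h.eigenvalues i)) else 0

def proj {n : Type*} (ψ : n → ℂ) : Matrix n n ℂ :=
  Matrix.of fun x y => ψ x * (starRingEnd ℂ) (ψ y)

def ptraceL {a b : Type*} [Fintype a] (ρ : Matrix (a × b) (a × b) ℂ) : Matrix b b ℂ :=
  Matrix.of fun i j => ∑ k, ρ (k, i) (k, j)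

def ptraceR {a b : Type*} [Fintype b] (ρ : Matrix (a × b) (a × b) ℂ) : Matrix a a ℂ :=
  Matrix.of fun i j => ∑ k, ρ (i, k) (j, k)

noncomputable def ent {X Y : Type*} [Fintype X] [Fintype Y] [DecidableEq Y]
    (ψ : X × Y → ℂ) : ℝ :=
  vN (ptraceL (proj ψ))

def IsPurification {A B : Type*} [Fintype A] [Fintype B] {dA' dB' : ℕ}
    (ρ : Matrix (A × B) (A × B) ℂ)
    (ψ : (A × Fin dA') × (B × Fin dB') → ℂ) : Prop :=
  (∑ x, ‖ψ x‖ ^ 2 = 1) ∧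
  ∀ a b a' b', ρ (a, b) (a', b') =
    ∑ a2 : Fin dA', ∑ b2 : Fin dB',
      ψ ((a, a2), (b, b2)) * (starRingEnd ℂ) (ψ ((a', a2), (b', b2)))

noncomputable def Ep {A B : Type*} [Fintype A] [Fintype B] [DecidableEq A] [DecidableEq B]
    (ρ : Matrix (A × B) (A × B) ℂ) : ℝ :=
  sInf { e : ℝ | ∃ (dA' dB' : ℕ) (ψ : (A × Fin dA') × (B × Fin dB') → ℂ),
    IsPurification ρ ψ ∧ e = ent ψ }

noncomputable def Iq {A B : Type*} [Fintype A] [Fintype B] [DecidableEq A] [DecidableEq B]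
    (ρ : Matrix (A × B) (A × B) ℂ) : ℝ :=
  vN (ptraceR ρ) + vN (ptraceL ρ) - vN ρ

open Classical in
noncomputable def msqrt {n : Type*} [Fintype n] [DecidableEq n] (M : Matrix n n ℂ) : Matrix n n ℂ :=
  if h : M.PosSemidef then
    h.1.eigenvectorUnitary.1 * diagonal ((↑) ∘ Real.sqrt ∘ h.1.eigenvalues) *
      (star h.1.eigenvectorUnitary : Matrix n n ℂ) else 0

noncomputable def fid {n : Type*} [Fintype n] [DecidableEq n] (ρ σ : Matrix n n ℂ) : ℝ :=
  ((msqrt (msqrt ρ * σ * msqrt ρ)).trace).re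

noncomputable def bures {n : Type*} [Fintype n] [DecidableEq n] (ρ σ : Matrix n n ℂ) : ℝ :=
  2 * Real.sqrt (1 - fid ρ σ)

noncomputable def traceNorm {n : Type*} [Fintype n] [DecidableEq n] (X : Matrix n n ℂ) : ℝ :=
  ((msqrt (Xᴴ * X)).trace).re

def IsPOVM {n : Type*} [Fintype n] [DecidableEq n] {k : ℕ} (M : Fin k → Matrix n n ℂ) : Prop :=
  (∀ i, (M i).PosSemidef) ∧ ∑ i, M i = 1

noncomputable def shannon {k : Type*} [Fintype k] (p : k → ℝ) : ℝ :=
  ∑ i, -(p i * Real.logb 2 (p i))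

noncomputable def miJoint {k l : Type*} [Fintype k] [Fintype l] (p : k × l → ℝ) : ℝ :=
  shannon (fun i => ∑ j, p (i, j)) + shannon (fun j => ∑ i, p (i, j)) - shannon p

noncomputable def Ic {A B : Type*} [Fintype A] [Fintype B] [DecidableEq A] [DecidableEq B]
    (ρ : Matrix (A × B) (A × B) ℂ) : ℝ :=
  sSup { e : ℝ | ∃ (k l : ℕ) (MA : Fin k → Matrix A A ℂ) (MB : Fin l → Matrix B B ℂ),
    IsPOVM MA ∧ IsPOVM MB ∧
    e = miJoint (fun ij : Fin k × Fin l => (((MA ij.1 ⊗ₖ MB ij.2) * ρ).trace).re) }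

noncomputable def probOf {A B : Type*} [Fintype A] [Fintype B] [DecidableEq A] [DecidableEq B]
    (M : Matrix A A ℂ) (ρ : Matrix (A × B) (A × B) ℂ) : ℝ :=
  (((M ⊗ₖ (1 : Matrix B B ℂ)) * ρ).trace).re

noncomputable def postB {A B : Type*} [Fintype A] [Fintype B] [DecidableEq A] [DecidableEq B]
    (M : Matrix A A ℂ) (ρ : Matrix (A × B) (A × B) ℂ) : Matrix B B ℂ :=
  ((probOf M ρ : ℂ))⁻¹ • ptraceL ((M ⊗ₖ (1 : Matrix B B ℂ)) * ρ)

noncomputable def CA {A B : Type*} [Fintype A] [Fintype B] [DecidableEq A] [DecidableEq B]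
    (ρ : Matrix (A × B) (A × B) ℂ) : ℝ :=
  sSup { c : ℝ | ∃ (k : ℕ) (M : Fin k → Matrix A A ℂ), IsPOVM M ∧
    c = vN (∑ i, (probOf (M i) ρ : ℂ) • postB (M i) ρ)
        - ∑ i, probOf (M i) ρ * vN (postB (M i) ρ) }

noncomputable def pauli : Fin 4 → Matrix (Fin 2) (Fin 2) ℂ :=
  ![1, !![0, 1; 1, 0], !![0, -Complex.I; Complex.I, 0], !![1, 0; 0, -1]]

noncomputable def bell0 : Fin 2 × Fin 2 → ℂ :=
  fun x => if x.1 = x.2 then ((Real.sqrt 2)⁻¹ : ℝ) else 0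

noncomputable def bell (i : Fin 4) : Fin 2 × Fin 2 → ℂ :=
  fun x => ∑ j, pauli i x.2 j * bell0 (x.1, j)

noncomputable def binEnt (x : ℝ) : ℝ :=
  -(x * Real.logb 2 x) - (1 - x) * Real.logb 2 (1 - x)

noncomputable def pauliChannel (p : Fin 4 → ℝ) (X : Matrix (Fin 2) (Fin 2) ℂ) :
    Matrix (Fin 2) (Fin 2) ℂ :=
  ∑ i, (p i : ℂ) • (pauli i * X * pauli i)

noncomputable def holevoCap (Λ : Matrix (Fin 2) (Fin 2) ℂ → Matrix (Fin 2) (Fin 2) ℂ) : ℝ :=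
  sSup { c : ℝ | ∃ (k : ℕ) (q : Fin k → ℝ) (ρs : Fin k → Matrix (Fin 2) (Fin 2) ℂ),
    (∀ i, 0 ≤ q i) ∧ (∑ i, q i = 1) ∧ (∀ i, IsDensity (ρs i)) ∧
    c = vN (∑ i, (q i : ℂ) • Λ (ρs i)) - ∑ i, q i * vN (Λ (ρs i)) }

def tensPow {A B : Type*} [Fintype A] [Fintype B]
    (ρ : Matrix (A × B) (A × B) ℂ) (n : ℕ) :
    Matrix ((Fin n → A) × (Fin n → B)) ((Fin n → A) × (Fin n → B)) ℂ :=
  Matrix.of fun x y => ∏ t, ρ (x.1 t, x.2 t) (y.1 t, y.2 t)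


/-! ### Auxiliary lemmas -/

section Aux

lemma binEnt_eq (x : ℝ) : binEnt x = Real.binEntropy x / Real.log 2 := by
  simp [binEnt, Real.binEntropy, Real.logb, Real.log_inv]; ring

lemma binEnt_one_sub (x : ℝ) : binEnt (1 - x) = binEnt x := by simp [binEnt_eq]

lemma binEnt_half : binEnt (1/2) = 1 := by
  rw [binEnt_eq, show (1/2 : ℝ) = 2⁻¹ by norm_num, Real.binEntropy_two_inv]
  exact div_self (ne_of_gt (Real.log_pos one_lt_two))

lemma min_facts {a : ℝ} (h0 : 0 ≤ a) (h1 : a ≤ 1) :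
    min a (1-a) ∈ Set.Icc (0:ℝ) 2⁻¹ ∧ min a (1-a) * (1 - min a (1-a)) = a * (1-a)
      ∧ Real.binEntropy (min a (1-a)) = Real.binEntropy a := by
  rcases le_total a (1-a) with h | h
  · rw [min_eq_left h]
    exact ⟨⟨h0, by linarith⟩, rfl, rfl⟩
  · rw [min_eq_right h]
    exact ⟨⟨by linarith, by linarith⟩, by ring, Real.binEntropy_one_sub a⟩

lemma binEnt_mono {x l : ℝ} (hx0 : 0 ≤ x) (hx1 : x ≤ 1) (h : x * (1 - x) ≤ l * (1 - l)) :
    binEnt x ≤ binEnt l := by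
  have hl0 : 0 ≤ l := by nlinarith
  have hl1 : l ≤ 1 := by nlinarith
  rw [binEnt_eq, binEnt_eq]
  obtain ⟨hxI, hxq, hxe⟩ := min_facts hx0 hx1
  obtain ⟨hlI, hlq, hle'⟩ := min_facts hl0 hl1
  have key : Real.binEntropy x ≤ Real.binEntropy l := by
    have hle : min x (1-x) ≤ min l (1-l) := by
      nlinarith [hxI.1, hxI.2, hlI.1, hlI.2]
    calc Real.binEntropy x = Real.binEntropy (min x (1-x)) := hxe.symm
      _ ≤ Real.binEntropy (min l (1-l)) := Real.binEntropy_strictMonoOn.monotoneOn hxI hlI hle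
      _ = Real.binEntropy l := hle'
  exact div_le_div_of_nonneg_right key (Real.log_pos one_lt_two).le

lemma trace_eq_sum_eig {n : Type*} [Fintype n] [DecidableEq n] {A : Matrix n n ℂ}
    (hA : A.IsHermitian) : A.trace = ∑ i, (hA.eigenvalues i : ℂ) := by
  conv_lhs => rw [hA.spectral_theorem]
  rw [Unitary.conjStarAlgAut_apply, Matrix.trace_mul_comm, ← Matrix.mul_assoc]
  have : (star (hA.eigenvectorUnitary : Matrix n n ℂ)) * (hA.eigenvectorUnitary : Matrix n n ℂ)
      = 1 := by
    simp [Unitary.star_mul_self_of_mem (hA.eigenvectorUnitary).2]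
  rw [this, Matrix.one_mul, Matrix.trace_diagonal]
  rfl

lemma vN_two {ρ : Matrix (Fin 2) (Fin 2) ℂ} (hρ : ρ.IsHermitian) (htr : ρ.trace = 1) :
    ∃ l : ℝ, vN ρ = binEnt l ∧ l * (1 - l) = ρ.det.re := by
  have hsum : hρ.eigenvalues 0 + hρ.eigenvalues 1 = 1 := by
    have := trace_eq_sum_eig hρ
    rw [htr, Fin.sum_univ_two] at this
    exact_mod_cast this.symm
  have hdet : ρ.det = ((hρ.eigenvalues 0 * hρ.eigenvalues 1 : ℝ) : ℂ) := by
    rw [hρ.det_eq_prod_eigenvalues, Fin.prod_univ_two]; push_cast; ring_nf; rfl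
  refine ⟨hρ.eigenvalues 0, ?_, ?_⟩
  · rw [vN, dif_pos hρ, Fin.sum_univ_two]
    have h1 : hρ.eigenvalues 1 = 1 - hρ.eigenvalues 0 := by linarith
    rw [h1]; rw [binEnt]; ring
  · rw [hdet, Complex.ofReal_re]
    have h1 : hρ.eigenvalues 1 = 1 - hρ.eigenvalues 0 := by linarith
    rw [h1]

lemma vN_eq_binEnt {ρ : Matrix (Fin 2) (Fin 2) ℂ} (hρ : ρ.IsHermitian) (htr : ρ.trace = 1)
    {x : ℝ} (hdet : ρ.det.re = x * (1 - x)) : vN ρ = binEnt x := by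
  obtain ⟨l, hvN, hl⟩ := vN_two hρ htr
  rw [hvN]
  have : (l - x) * (l - (1 - x)) = 0 := by nlinarith [hl, hdet]
  rcases mul_eq_zero.mp this with h | h
  · rw [show l = x by linarith]
  · rw [show l = 1 - x by linarith, binEnt_one_sub]

lemma s_mul_s : ((Real.sqrt 2)⁻¹ : ℂ) * ((Real.sqrt 2)⁻¹ : ℂ) = 1/2 := by
  have : (Real.sqrt 2) * (Real.sqrt 2) = 2 := Real.mul_self_sqrt (by norm_num)
  rw [← Complex.ofReal_inv, ← Complex.ofReal_mul, ← mul_inv, this]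
  norm_num

lemma s2c : ((Real.sqrt 2 : ℝ) : ℂ) ^ 2 = 2 := by
  rw [← Complex.ofReal_pow, Real.sq_sqrt (by norm_num : (2:ℝ) ≥ 0)]; norm_num

lemma bell_zero : bell 0 = bell0 := by
  funext ⟨a, b⟩
  simp [bell, pauli, Fin.sum_univ_two, Matrix.one_apply, bell0]
  fin_cases a <;> fin_cases b <;> simp

lemma bell_complete : proj (bell 0) + proj (bell 1) + proj (bell 2) + proj (bell 3) = 1 := by
  ext ⟨a, b⟩ ⟨c, d⟩
  simp only [Matrix.add_apply, proj, bell, pauli, bell0, Matrix.of_apply, Fin.sum_univ_two,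
    Matrix.one_apply]
  fin_cases a <;> fin_cases b <;> fin_cases c <;> fin_cases d <;>
    simp [Matrix.one_apply, Prod.ext_iff, _root_.map_mul, Complex.conj_I] <;> ring_nf <;>
    simp [s_mul_s] <;> ring_nf <;>
    norm_num [s2c]

lemma ptraceL_kron0 (c d : ℂ) (M : Matrix (Fin 2) (Fin 2) ℂ) :
    ptraceL ((M ⊗ₖ (1 : Matrix (Fin 2) (Fin 2) ℂ)) *
        (c • (1 : Matrix (Fin 2 × Fin 2) (Fin 2 × Fin 2) ℂ) + d • proj bell0)) =
      (c * M.trace) • (1 : Matrix (Fin 2) (Fin 2) ℂ) + (d/2) • Mᵀ := by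
  ext i j
  simp only [ptraceL, Matrix.of_apply, Matrix.mul_apply, Fintype.sum_prod_type,
    Matrix.add_apply, Matrix.smul_apply, Matrix.kroneckerMap_apply, proj, bell0,
    Matrix.one_apply, Matrix.trace, Matrix.diag, Matrix.transpose_apply, smul_eq_mul,
    Fin.sum_univ_two]
  fin_cases i <;> fin_cases j <;>
    simp [Prod.ext_iff, _root_.map_mul] <;> ring_nf <;>
    simp [s_mul_s] <;> ring_nf <;>
    norm_num [s2c]

lemma trace_ptraceL {a b : Type*} [Fintype a] [Fintype b] (X : Matrix (a × b) (a × b) ℂ) :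
    (ptraceL X).trace = X.trace := by
  simp [ptraceL, Matrix.trace, Matrix.diag, Fintype.sum_prod_type]
  rw [Finset.sum_comm]

section Psd
variable {M : Matrix (Fin 2) (Fin 2) ℂ}

lemma psd_trace_eq (hM : M.PosSemidef) : M.trace = ((M.trace.re : ℝ) : ℂ) := by
  rw [trace_eq_sum_eig hM.1, Fin.sum_univ_two]
  push_cast
  simp

lemma psd_trace_nonneg (hM : M.PosSemidef) : 0 ≤ M.trace.re := by
  have h := trace_eq_sum_eig hM.1
  have : M.trace.re = hM.1.eigenvalues 0 + hM.1.eigenvalues 1 := by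
    rw [h, Fin.sum_univ_two]; push_cast; simp
  rw [this]
  have h0 := hM.eigenvalues_nonneg 0
  have h1 := hM.eigenvalues_nonneg 1
  linarith

lemma psd_det_eq (hM : M.PosSemidef) : M.det = ((M.det.re : ℝ) : ℂ) := by
  rw [hM.1.det_eq_prod_eigenvalues, Fin.prod_univ_two]
  push_cast
  simp

lemma psd_det_nonneg (hM : M.PosSemidef) : 0 ≤ M.det.re := by
  have h : M.det = ((hM.1.eigenvalues 0 * hM.1.eigenvalues 1 : ℝ) : ℂ) := by
    rw [hM.1.det_eq_prod_eigenvalues, Fin.prod_univ_two]; push_cast; ring_nf; rfl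
  rw [h, Complex.ofReal_re]
  exact mul_nonneg (hM.eigenvalues_nonneg 0) (hM.eigenvalues_nonneg 1)

lemma psd_trace_zero (hM : M.PosSemidef) (h : M.trace.re = 0) : M = 0 := by
  have h0 : ∀ i, hM.1.eigenvalues i = 0 := by
    have hre : M.trace.re = hM.1.eigenvalues 0 + hM.1.eigenvalues 1 := by
      rw [trace_eq_sum_eig hM.1, Fin.sum_univ_two]; push_cast; simp
    intro i
    have h0 := hM.eigenvalues_nonneg 0
    have h1 := hM.eigenvalues_nonneg 1
    fin_cases i <;> simp <;> linarith [hre ▸ h]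
  have hsp := hM.1.spectral_theorem
  rw [hsp]
  have : Matrix.diagonal (RCLike.ofReal ∘ hM.1.eigenvalues) = (0 : Matrix (Fin 2) (Fin 2) ℂ) := by
    ext i j
    simp [Matrix.diagonal, h0]
  rw [this, map_zero]

end Psd

lemma herm_comb (a b : ℝ) {M : Matrix (Fin 2) (Fin 2) ℂ} (hM : M.IsHermitian) :
    (((a : ℂ)) • (1 : Matrix (Fin 2) (Fin 2) ℂ) + ((b : ℂ)) • Mᵀ).IsHermitian := by
  have hs : ∀ i j, (starRingEnd ℂ) (M i j) = M j i := fun i j => by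
    conv_rhs => rw [← hM]
    rfl
  show _ = _
  ext i j
  simp [Matrix.conjTranspose_apply, Matrix.one_apply, Matrix.add_apply, Matrix.smul_apply,
    Matrix.transpose_apply, hs, Complex.conj_ofReal, apply_ite]
  rcases eq_or_ne i j with h | h <;> simp [h]
  exact fun hji => absurd hji.symm h

lemma det_comb (a b : ℂ) (M : Matrix (Fin 2) (Fin 2) ℂ) :
    (a • (1 : Matrix (Fin 2) (Fin 2) ℂ) + b • Mᵀ).det
      = a^2 + a * b * M.trace + b^2 * M.det := by
  simp [Matrix.det_fin_two, Matrix.trace_fin_two, Matrix.one_apply]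
  ring

lemma trace_comb (a b : ℂ) (M : Matrix (Fin 2) (Fin 2) ℂ) :
    (a • (1 : Matrix (Fin 2) (Fin 2) ℂ) + b • Mᵀ).trace = 2 * a + b * M.trace := by
  simp [Matrix.trace_add, Matrix.trace_smul, Matrix.trace_one, Matrix.trace_transpose,
    smul_eq_mul]
  ring

def rhoW (e : ℝ) : Matrix (Fin 2 × Fin 2) (Fin 2 × Fin 2) ℂ :=
  (((1 - e) / 3 : ℝ) : ℂ) • 1 + (((4 * e - 1) / 3 : ℝ) : ℂ) • proj bell0

lemma rhoW_eq (e : ℝ) :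
    (e : ℂ) • proj (bell 0) +
      (((1 - e) / 3 : ℝ) : ℂ) • (proj (bell 1) + proj (bell 2) + proj (bell 3)) = rhoW e := by
  have h3 : proj (bell 1) + proj (bell 2) + proj (bell 3) = 1 - proj (bell 0) := by
    have h := bell_complete
    have : proj (bell 1) + proj (bell 2) + proj (bell 3)
        = (proj (bell 0) + proj (bell 1) + proj (bell 2) + proj (bell 3)) - proj (bell 0) := by
      abel
    rw [this, h]
  rw [h3, bell_zero, rhoW]
  rw [smul_sub]
  match_scalars <;> push_cast <;> ring

lemma ptraceL_rhoW (e : ℝ) (M : Matrix (Fin 2) (Fin 2) ℂ) :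
    ptraceL ((M ⊗ₖ (1 : Matrix (Fin 2) (Fin 2) ℂ)) * rhoW e) =
      ((((1 - e) / 3 : ℝ) : ℂ) * M.trace) • 1 + ((((4 * e - 1) / 3 : ℝ) : ℂ) / 2) • Mᵀ :=
  ptraceL_kron0 _ _ M

lemma probOf_rhoW (e : ℝ) {M : Matrix (Fin 2) (Fin 2) ℂ} (hM : M.PosSemidef) :
    probOf M (rhoW e) = M.trace.re / 2 := by
  obtain ⟨m, hm, hmre⟩ : ∃ m : ℝ, M.trace = (m : ℂ) ∧ M.trace.re = m :=
    ⟨M.trace.re, psd_trace_eq hM, rfl⟩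
  rw [probOf, ← trace_ptraceL, ptraceL_rhoW, trace_comb, hm]
  simp only [Complex.ofReal_re]
  have : 2 * ((((1 - e) / 3 : ℝ) : ℂ) * ((m : ℝ) : ℂ)) +
      ((((4 * e - 1) / 3 : ℝ) : ℂ) / 2) * ((m : ℝ) : ℂ) = ((m / 2 : ℝ) : ℂ) := by
    push_cast; ring
  rw [this, Complex.ofReal_re]

lemma probOf_rhoW_nonneg (e : ℝ) {M : Matrix (Fin 2) (Fin 2) ℂ} (hM : M.PosSemidef) :
    0 ≤ probOf M (rhoW e) := by
  rw [probOf_rhoW e hM]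
  have := psd_trace_nonneg hM
  linarith

lemma postB_eq (e : ℝ) {M : Matrix (Fin 2) (Fin 2) ℂ} (hM : M.PosSemidef)
    (hm0 : M.trace.re ≠ 0) :
    postB M (rhoW e) = ((2 * (1 - e) / 3 : ℝ) : ℂ) • (1 : Matrix (Fin 2) (Fin 2) ℂ)
      + (((4 * e - 1) / (3 * M.trace.re) : ℝ) : ℂ) • Mᵀ := by
  obtain ⟨m, hm, hmre⟩ : ∃ m : ℝ, M.trace = (m : ℂ) ∧ M.trace.re = m :=
    ⟨M.trace.re, psd_trace_eq hM, rfl⟩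
  have hm0' : m ≠ 0 := hmre ▸ hm0
  have hmc : (m : ℂ) ≠ 0 := Complex.ofReal_ne_zero.mpr hm0'
  rw [postB, probOf_rhoW e hM, ptraceL_rhoW, hm]
  simp only [Complex.ofReal_re, hmre]
  rw [smul_add, smul_smul, smul_smul]
  congr 1
  · congr 1
    push_cast
    field_simp
  · congr 1
    push_cast
    field_simp

lemma postB_props (e : ℝ) {M : Matrix (Fin 2) (Fin 2) ℂ} (hM : M.PosSemidef)
    (hm0 : M.trace.re ≠ 0) :
    (postB M (rhoW e)).IsHermitian ∧ (postB M (rhoW e)).trace = 1 ∧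
    (postB M (rhoW e)).det.re =
      (1 + 2 * e) / 3 * (1 - (1 + 2 * e) / 3)
        + ((4 * e - 1) ^ 2 * M.det.re) / (9 * M.trace.re ^ 2) := by
  obtain ⟨m, hm, hmre⟩ : ∃ m : ℝ, M.trace = (m : ℂ) ∧ M.trace.re = m :=
    ⟨M.trace.re, psd_trace_eq hM, rfl⟩
  obtain ⟨dm, hd, hdre⟩ : ∃ dm : ℝ, M.det = (dm : ℂ) ∧ M.det.re = dm :=
    ⟨M.det.re, psd_det_eq hM, rfl⟩
  have hm0' : m ≠ 0 := hmre ▸ hm0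
  rw [postB_eq e hM hm0, hmre, hdre]
  refine ⟨herm_comb _ _ hM.1, ?_, ?_⟩
  · rw [trace_comb, hm]
    have : 2 * ((2 * (1 - e) / 3 : ℝ) : ℂ) + (((4 * e - 1) / (3 * m) : ℝ) : ℂ) * ((m : ℝ) : ℂ)
        = 1 := by
      push_cast
      field_simp
      ring
    rw [this]
  · rw [det_comb, hm, hd]
    have : (((2 * (1 - e) / 3 : ℝ) : ℂ)) ^ 2
        + (((2 * (1 - e) / 3 : ℝ) : ℂ)) * (((4 * e - 1) / (3 * m) : ℝ) : ℂ) * ((m : ℝ) : ℂ)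
        + (((4 * e - 1) / (3 * m) : ℝ) : ℂ) ^ 2 * ((dm : ℝ) : ℂ)
        = (((1 + 2 * e) / 3 * (1 - (1 + 2 * e) / 3)
            + ((4 * e - 1) ^ 2 * dm) / (9 * m ^ 2) : ℝ) : ℂ) := by
      push_cast
      field_simp
      ring
    rw [this, Complex.ofReal_re]

lemma smul_postB (e : ℝ) {M : Matrix (Fin 2) (Fin 2) ℂ} (hM : M.PosSemidef) :
    (probOf M (rhoW e) : ℂ) • postB M (rhoW e)
      = ptraceL ((M ⊗ₖ (1 : Matrix (Fin 2) (Fin 2) ℂ)) * rhoW e) := by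
  rcases eq_or_ne (probOf M (rhoW e)) 0 with h | h
  · have hM0 : M = 0 := by
      apply psd_trace_zero hM
      rw [probOf_rhoW e hM] at h
      linarith
    rw [h, hM0]
    rw [Matrix.zero_kronecker, Matrix.zero_mul]
    have : ptraceL (0 : Matrix (Fin 2 × Fin 2) (Fin 2 × Fin 2) ℂ) = 0 := by
      ext i j; simp [ptraceL]
    rw [this]
    simp
  · rw [postB, smul_smul, mul_inv_cancel₀ (Complex.ofReal_ne_zero.mpr h), one_smul]

lemma sum_postB (e : ℝ) {k : ℕ} {M : Fin k → Matrix (Fin 2) (Fin 2) ℂ} (hp : IsPOVM M) :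
    ∑ i, (probOf (M i) (rhoW e) : ℂ) • postB (M i) (rhoW e)
      = ((1 / 2 : ℝ) : ℂ) • (1 : Matrix (Fin 2) (Fin 2) ℂ) := by
  rw [Finset.sum_congr rfl fun i _ => smul_postB e (hp.1 i)]
  rw [Finset.sum_congr rfl fun i _ => congrArg ptraceL rfl]
  rw [Finset.sum_congr rfl fun i _ => ptraceL_rhoW e (M i)]
  rw [Finset.sum_add_distrib, ← Finset.sum_smul, ← Finset.smul_sum, ← Finset.mul_sum,
    ← Matrix.trace_sum, ← Matrix.transpose_sum, hp.2, Matrix.trace_one, Matrix.transpose_one]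
  rw [← add_smul]
  congr 1
  push_cast
  simp
  ring

lemma vN_half : vN (((1 / 2 : ℝ) : ℂ) • (1 : Matrix (Fin 2) (Fin 2) ℂ)) = 1 := by
  have hh : (((1 / 2 : ℝ) : ℂ) • (1 : Matrix (Fin 2) (Fin 2) ℂ)).IsHermitian := by
    simpa using herm_comb (1 / 2) 0 (Matrix.isHermitian_one)
  rw [vN_eq_binEnt hh ?_ (x := 1 / 2) ?_, binEnt_half]
  · rw [Matrix.trace_smul, Matrix.trace_one]
    push_cast
    norm_num
  · rw [Matrix.det_smul, Matrix.det_one]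
    norm_num

lemma sum_prob (e : ℝ) {k : ℕ} {M : Fin k → Matrix (Fin 2) (Fin 2) ℂ} (hp : IsPOVM M) :
    ∑ i, probOf (M i) (rhoW e) = 1 := by
  rw [Finset.sum_congr rfl fun i _ => probOf_rhoW e (hp.1 i)]
  have h2 : ∑ i, (M i).trace.re = 2 := by
    rw [← Complex.re_sum, ← Matrix.trace_sum, hp.2, Matrix.trace_one]
    norm_num
  rw [← Finset.sum_div, h2]
  norm_num


lemma witness_povm : IsPOVM (![!![(1:ℂ),0;0,0], !![(0:ℂ),0;0,1]] : Fin 2 → Matrix (Fin 2) (Fin 2) ℂ) := by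
  constructor
  · intro i
    fin_cases i <;> refine posSemidef_iff_dotProduct_mulVec.mpr ⟨?_, ?_⟩
    · show _ = _; ext i j; fin_cases i <;> fin_cases j <;> simp
    · intro x
      have : dotProduct (star x) ((!![(1:ℂ),0;0,0]) *ᵥ x) = star (x 0) * x 0 := by
        simp [dotProduct, Matrix.mulVec, Fin.sum_univ_two]
      show (0:ℂ) ≤ star x ⬝ᵥ (!![(1:ℂ),0;0,0] *ᵥ x)
      rw [this]
      exact star_mul_self_nonneg (x 0)
    · show _ = _; ext i j; fin_cases i <;> fin_cases j <;> simp
    · intro x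
      have : dotProduct (star x) ((!![(0:ℂ),0;0,1]) *ᵥ x) = star (x 1) * x 1 := by
        simp [dotProduct, Matrix.mulVec, Fin.sum_univ_two]
      show (0:ℂ) ≤ star x ⬝ᵥ (!![(0:ℂ),0;0,1] *ᵥ x)
      rw [this]
      exact star_mul_self_nonneg (x 1)
  · rw [Fin.sum_univ_two]
    ext i j
    fin_cases i <;> fin_cases j <;> simp [Matrix.one_apply]

lemma vN_postB_witness (e : ℝ) {M : Matrix (Fin 2) (Fin 2) ℂ} (hM : M.PosSemidef)
    (htr : M.trace.re = 1) (hdet : M.det.re = 0) :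
    vN (postB M (rhoW e)) = binEnt ((1 + 2 * e) / 3) := by
  have hm0 : M.trace.re ≠ 0 := by rw [htr]; norm_num
  obtain ⟨hherm, htr1, hdet1⟩ := postB_props e hM hm0
  apply vN_eq_binEnt hherm htr1
  rw [hdet1, hdet, htr]
  ring

lemma ub_mem (e : ℝ) (he0 : 0 ≤ e) (he1 : e ≤ 1) :
    ∀ c ∈ { c : ℝ | ∃ (k : ℕ) (M : Fin k → Matrix (Fin 2) (Fin 2) ℂ), IsPOVM M ∧
      c = vN (∑ i, (probOf (M i) (rhoW e) : ℂ) • postB (M i) (rhoW e))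
          - ∑ i, probOf (M i) (rhoW e) * vN (postB (M i) (rhoW e)) },
      c ≤ 1 - binEnt ((1 + 2 * e) / 3) := by
  rintro c ⟨k, M, hp, rfl⟩
  rw [sum_postB e hp, vN_half]
  have hx00 : (0:ℝ) ≤ (1 + 2 * e) / 3 := by linarith
  have hx01 : (1 + 2 * e) / 3 ≤ 1 := by linarith
  have hterm : ∀ i ∈ Finset.univ,
      probOf (M i) (rhoW e) * binEnt ((1 + 2 * e) / 3)
        ≤ probOf (M i) (rhoW e) * vN (postB (M i) (rhoW e)) := by
    intro i _
    rcases eq_or_ne ((M i).trace.re) 0 with h | h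
    · rw [probOf_rhoW e (hp.1 i), h]
      norm_num
    · apply mul_le_mul_of_nonneg_left ?_ (probOf_rhoW_nonneg e (hp.1 i))
      obtain ⟨hherm, htr1, hdet1⟩ := postB_props e (hp.1 i) h
      obtain ⟨l, hvl, hll⟩ := vN_two hherm htr1
      rw [hvl]
      apply binEnt_mono hx00 hx01
      rw [hll, hdet1]
      have h1 : 0 ≤ ((4 * e - 1) ^ 2 * (M i).det.re) / (9 * (M i).trace.re ^ 2) := by
        have := psd_det_nonneg (hp.1 i)
        positivity
      linarith
  have hsum : binEnt ((1 + 2 * e) / 3)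
      ≤ ∑ i, probOf (M i) (rhoW e) * vN (postB (M i) (rhoW e)) := by
    calc binEnt ((1 + 2 * e) / 3)
        = ∑ i, probOf (M i) (rhoW e) * binEnt ((1 + 2 * e) / 3) := by
          rw [← Finset.sum_mul, sum_prob e hp, one_mul]
      _ ≤ _ := Finset.sum_le_sum hterm
  linarith

lemma mem_CA (e : ℝ) :
    (1 - binEnt ((1 + 2 * e) / 3)) ∈ { c : ℝ | ∃ (k : ℕ) (M : Fin k → Matrix (Fin 2) (Fin 2) ℂ),
      IsPOVM M ∧
      c = vN (∑ i, (probOf (M i) (rhoW e) : ℂ) • postB (M i) (rhoW e))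
          - ∑ i, probOf (M i) (rhoW e) * vN (postB (M i) (rhoW e)) } := by
  refine ⟨2, ![!![(1:ℂ),0;0,0], !![(0:ℂ),0;0,1]], witness_povm, ?_⟩
  rw [sum_postB e witness_povm, vN_half]
  have hpsd0 : (!![(1:ℂ),0;0,0]).PosSemidef := witness_povm.1 0
  have hpsd1 : (!![(0:ℂ),0;0,1]).PosSemidef := witness_povm.1 1
  have h0 : vN (postB (!![(1:ℂ),0;0,0]) (rhoW e)) = binEnt ((1 + 2 * e) / 3) := by
    apply vN_postB_witness e hpsd0
    · simp [Matrix.trace_fin_two]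
    · simp [Matrix.det_fin_two]
  have h1 : vN (postB (!![(0:ℂ),0;0,1]) (rhoW e)) = binEnt ((1 + 2 * e) / 3) := by
    apply vN_postB_witness e hpsd1
    · simp [Matrix.trace_fin_two]
    · simp [Matrix.det_fin_two]
  have hp0 : probOf (!![(1:ℂ),0;0,0]) (rhoW e) = 1 / 2 := by
    rw [probOf_rhoW e hpsd0]
    simp [Matrix.trace_fin_two]
  have hp1 : probOf (!![(0:ℂ),0;0,1]) (rhoW e) = 1 / 2 := by
    rw [probOf_rhoW e hpsd1]
    simp [Matrix.trace_fin_two]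
  rw [Fin.sum_univ_two]
  show _ = 1 - (probOf (!![(1:ℂ),0;0,0]) (rhoW e) * vN (postB (!![(1:ℂ),0;0,0]) (rhoW e))
    + probOf (!![(0:ℂ),0;0,1]) (rhoW e) * vN (postB (!![(0:ℂ),0;0,1]) (rhoW e)))
  rw [hp0, hp1, h0, h1]
  ring

end Aux

/-- locally induced Holevo information of two-qubit Werner states
ρ_W = e|Ψ₀⟩⟨Ψ₀| + ((1−e)/3)Σᵢ|Ψᵢ⟩⟨Ψᵢ|. -/
theorem stmt19 (e : ℝ) (he0 : 0 ≤ e) (he1 : e ≤ 1) :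
    (1 / 4 ≤ e →
      CA ((e : ℂ) • proj (bell 0) +
          (((1 - e) / 3 : ℝ) : ℂ) • (proj (bell 1) + proj (bell 2) + proj (bell 3))) =
        1 - binEnt ((1 + 2 * e) / 3)) ∧
    (e ≤ 1 / 4 →
      CA ((e : ℂ) • proj (bell 0) +
          (((1 - e) / 3 : ℝ) : ℂ) • (proj (bell 1) + proj (bell 2) + proj (bell 3))) =
        1 - binEnt ((2 - 2 * e) / 3)) := by
  have hKey : CA ((e : ℂ) • proj (bell 0) +
      (((1 - e) / 3 : ℝ) : ℂ) • (proj (bell 1) + proj (bell 2) + proj (bell 3)))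
      = 1 - binEnt ((1 + 2 * e) / 3) := by
    rw [rhoW_eq e]
    unfold CA
    apply le_antisymm
    · exact csSup_le ⟨_, mem_CA e⟩ (ub_mem e he0 he1)
    · exact le_csSup ⟨1 - binEnt ((1 + 2 * e) / 3), ub_mem e he0 he1⟩ (mem_CA e)
  constructor
  · intro _
    exact hKey
  · intro _
    rw [hKey]
    have h : (2 - 2 * e) / 3 = 1 - (1 + 2 * e) / 3 := by ring
    rw [h, binEnt_one_sub]

end QIT
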